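/- Consider the classical channel with input X ∈ {0,1,2}, outputs Y ∈ {0,1} and Z ∈ {0,1} defined by: Y = 0 if X ∈ {0,1}, Y = 1 if X = 2; Z = 0 if X = 0, Z = 1 if X = 1, and Z uniform on {0,1} if X = 2. Then for every input distribution P_X, H(X|Z) − H(X|Y) < 1, where H denotes Shannon conditional entropy. -/

import Mathlib

/-- Shannon entropy (base 2) of a finitely supported distribution. -/
noncomputable def H2 {ι : Type*} [Fintype ι] (q : ι → ℝ) : ℝ :=
  ∑ i : ι, -(q i * Real.logb 2 (q i))

/-- Channel `X → Y` of the example: `Y = 0` if `X ∈ {0,1}`, `Y = 1` if `X = 2`. -/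
noncomputable def chY : Fin 3 → Fin 2 → ℝ := fun x y =>
  if (x = 0 ∨ x = 1) ∧ y = 0 ∨ x = 2 ∧ y = 1 then 1 else 0

/-- Channel `X → Z` of the example: `Z = X` for `X ∈ {0,1}`, `Z` uniform if `X = 2`. -/
noncomputable def chZ : Fin 3 → Fin 2 → ℝ := fun x z =>
  if x = 2 then 1 / 2 else if x = 0 ∧ z = 0 ∨ x = 1 ∧ z = 1 then 1 else 0

open Real in
/-- Grouping identity for `negMulLog`. -/
lemma aux_group (x y : ℝ) (hc : 0 < x + y) :
    negMulLog x + negMulLog y - negMulLog (x + y) = (x + y) * binEntropy (x / (x + y)) := by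
  set c := x + y with hcdef
  have hcne : c ≠ 0 := hc.ne'
  have h1 : (1 : ℝ) - x / c = y / c := by field_simp [hcdef]; linarith
  have hxe : x = c * (x / c) := by field_simp
  have hye : y = c * (y / c) := by field_simp
  rw [binEntropy_eq_negMulLog_add_negMulLog_one_sub, h1]
  calc negMulLog x + negMulLog y - negMulLog c
      = negMulLog (c * (x/c)) + negMulLog (c * (y/c)) - negMulLog c := by rw [← hxe, ← hye]
    _ = (x/c) * negMulLog c + c * negMulLog (x/c)
        + ((y/c) * negMulLog c + c * negMulLog (y/c)) - negMulLog c := by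
          rw [negMulLog_mul, negMulLog_mul]
    _ = (x/c + y/c) * negMulLog c + c * (negMulLog (x/c) + negMulLog (y/c)) - negMulLog c := by ring
    _ = c * (negMulLog (x/c) + negMulLog (y/c)) := by
          rw [show x/c + y/c = 1 by field_simp; linarith]; ring

open Real in
/-- The core inequality in nats. -/
lemma aux_main (a b t : ℝ) (ha : 0 ≤ a) (hb : 0 ≤ b) (ht : 0 ≤ t) (hab : a + b = 1 - t) :
    2 * negMulLog (t * (1/2)) + negMulLog (a + b) - negMulLog (a + t * (1/2))
      - negMulLog (b + t * (1/2)) < Real.log 2 := by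
  have hL : (0:ℝ) < Real.log 2 := Real.log_pos one_lt_two
  have ht1 : t ≤ 1 := by nlinarith
  rcases eq_or_lt_of_le ht with h0 | htpos
  · -- t = 0
    rw [← h0] at hab ⊢
    have ha1 : a ≤ 1 := by nlinarith
    have hb1 : b ≤ 1 := by nlinarith
    have h2 := negMulLog_nonneg ha ha1
    have h3 := negMulLog_nonneg hb hb1
    simp only [mul_zero, zero_mul, negMulLog_zero]
    norm_num
    rw [hab]
    norm_num
    nlinarith
  · have halfE : negMulLog (t * (1/2)) = (1/2) * negMulLog t + (1/2) * (t * Real.log 2) := by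
      rw [negMulLog_mul]
      have : negMulLog (1/2 : ℝ) = (1/2) * Real.log 2 := by
        rw [negMulLog, one_div, Real.log_inv]; ring
      rw [this]; ring
    obtain ⟨q, hq⟩ : ∃ q : ℝ, q = a + t * (1/2) := ⟨_, rfl⟩
    have hq' : b + t * (1/2) = 1 - q := by rw [hq]; linarith
    have hbe : negMulLog q + negMulLog (b + t * (1/2)) = binEntropy q := by
      rw [hq', binEntropy_eq_negMulLog_add_negMulLog_one_sub]
    have hmono : binEntropy (t * (1/2)) ≤ binEntropy q := by
      have hs0 : 0 ≤ t * (1/2) := by linarith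
      have hql : t * (1/2) ≤ q := by rw [hq]; linarith
      have hqu : q ≤ 1 - t * (1/2) := by rw [hq]; linarith
      rcases le_or_gt q 2⁻¹ with hle | hgt
      · exact binEntropy_strictMonoOn.monotoneOn
          ⟨hs0, by linarith⟩ ⟨by linarith, hle⟩ hql
      · rw [← binEntropy_one_sub q]
        exact binEntropy_strictMonoOn.monotoneOn
          ⟨hs0, by linarith⟩ ⟨by linarith, by linarith⟩ (by linarith)
    have hgroup := aux_group (t * (1/2)) (1 - t) (by linarith)
    have hkey : negMulLog (t * (1/2)) + negMulLog (1 - t) - negMulLog (1 - t * (1/2))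
        ≤ (1 - t * (1/2)) * Real.log 2 := by
      have heq : t * (1/2) + (1 - t) = 1 - t * (1/2) := by ring
      rw [heq] at hgroup
      rw [hgroup]
      have h4 := binEntropy_le_log_two (p := t * (1/2) / (1 - t * (1/2)))
      nlinarith [h4, show (0:ℝ) < 1 - t * (1/2) by linarith]
    have hbt2 : binEntropy (t * (1/2)) = negMulLog (t * (1/2)) + negMulLog (1 - t * (1/2)) :=
      binEntropy_eq_negMulLog_add_negMulLog_one_sub _
    rw [hab, ← hq]
    have hfin : 2 * negMulLog (t * (1/2)) + negMulLog (1 - t) - binEntropy q < Real.log 2 := by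
      calc 2 * negMulLog (t * (1/2)) + negMulLog (1 - t) - binEntropy q
          ≤ 2 * negMulLog (t * (1/2)) + negMulLog (1 - t) - binEntropy (t * (1/2)) := by linarith
        _ = negMulLog (t * (1/2)) + negMulLog (1 - t) - negMulLog (1 - t * (1/2)) := by
            rw [hbt2]; ring
        _ ≤ (1 - t * (1/2)) * Real.log 2 := hkey
        _ < Real.log 2 := by nlinarith
    linarith [hbe]

/-- For the example channel, without a randomized encoding, no input distribution
achieves `H(X|Z) - H(X|Y) = 1`: the difference is strictly below 1 bit. -/
theorem example_channel_no_direct_one_bit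
    (p : Fin 3 → ℝ) (hp0 : ∀ x, 0 ≤ p x) (hp1 : ∑ x : Fin 3, p x = 1) :
    (H2 (fun xz : Fin 3 × Fin 2 => p xz.1 * chZ xz.1 xz.2)
        - H2 (fun z : Fin 2 => ∑ x : Fin 3, p x * chZ x z))
      - (H2 (fun xy : Fin 3 × Fin 2 => p xy.1 * chY xy.1 xy.2)
        - H2 (fun y : Fin 2 => ∑ x : Fin 3, p x * chY x y)) < 1 := by
  have hL : (0:ℝ) < Real.log 2 := Real.log_pos one_lt_two
  have hab : p 0 + p 1 = 1 - p 2 := by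
    rw [Fin.sum_univ_three] at hp1; linarith
  have e0 : ((0:Fin 3) = 2) = False := by simp
  have e1 : ((1:Fin 3) = 2) = False := by simp
  have e2 : ((2:Fin 3) = 0 ∨ (2:Fin 3) = 1) = False := by simp
  simp only [H2, chY, chZ, Fintype.sum_prod_type, Fin.sum_univ_three, Fin.sum_univ_two,
    e0, e1, e2, if_false, if_true]
  norm_num
  have key := aux_main (p 0) (p 1) (p 2) (hp0 0) (hp0 1) (hp0 2) hab
  have conv : -(p 0 * Real.logb 2 (p 0)) + -(p 1 * Real.logb 2 (p 1)) +
          (-(p 2 * (1 / 2) * Real.logb 2 (p 2 * (1 / 2))) + -(p 2 * (1 / 2) * Real.logb 2 (p 2 * (1 / 2)))) -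
        (-((p 0 + p 2 * (1 / 2)) * Real.logb 2 (p 0 + p 2 * (1 / 2))) +
          -((p 1 + p 2 * (1 / 2)) * Real.logb 2 (p 1 + p 2 * (1 / 2)))) -
      (-(p 0 * Real.logb 2 (p 0)) + -(p 1 * Real.logb 2 (p 1)) + (p 0 + p 1) * Real.logb 2 (p 0 + p 1))
      = (2 * Real.negMulLog (p 2 * (1/2)) + Real.negMulLog (p 0 + p 1)
          - Real.negMulLog (p 0 + p 2 * (1/2)) - Real.negMulLog (p 1 + p 2 * (1/2))) / Real.log 2 := by
    simp only [Real.logb, Real.negMulLog]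
    field_simp
    ring
  rw [conv, div_lt_one hL]
  exact key
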